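/- Let Y : M → N be a continuous map between locally compact Hausdorff spaces with set of not-proper points S_Y. If Y is an open map (e.g., a local homeomorphism), then the topological frontier of the image Y(M) is contained in S_Y. -/
import Mathlib


/-- The set of points at which `Y` is not proper. -/
def notProperSet {M N : Type*} [TopologicalSpace M] [TopologicalSpace N] (Y : M → N) : Set N :=
  {y | ¬ ∃ U ∈ nhds y, IsCompact (Y ⁻¹' closure U)}

theorem stmt2 {M N : Type*} [TopologicalSpace M] [TopologicalSpace N]
    [LocallyCompactSpace M] [T2Space M] [LocallyCompactSpace N] [T2Space N]
    (Y : M → N) (hY : Continuous Y) (hopen : IsOpenMap Y) :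
    frontier (Set.range Y) ⊆ notProperSet Y := by
  intro y hy hmem
  obtain ⟨U, hU, hK⟩ := hmem
  have hro : IsOpen (Set.range Y) := hopen.isOpen_range
  have hy2 : y ∉ Set.range Y := by
    have h := hy.2
    rwa [hro.interior_eq] at h
  have himg : IsCompact (Y '' (Y ⁻¹' closure U)) := hK.image hY
  have hclosed : IsClosed (Y '' (Y ⁻¹' closure U)) := himg.isClosed
  have hmemcl : y ∈ closure (Y '' (Y ⁻¹' closure U)) := by
    rw [mem_closure_iff_nhds]
    intro t ht
    have ht' : t ∩ closure U ∈ nhds y :=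
      Filter.inter_mem ht (Filter.mem_of_superset hU subset_closure)
    obtain ⟨z, hz1, hz2⟩ := mem_closure_iff_nhds.mp hy.1 _ ht'
    obtain ⟨x, rfl⟩ := hz2
    exact ⟨Y x, hz1.1, ⟨x, hz1.2, rfl⟩⟩
  rw [hclosed.closure_eq] at hmemcl
  obtain ⟨x, -, rfl⟩ := hmemcl
  exact hy2 ⟨x, rfl⟩
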